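/- Let x₁ and x₂ be the two real irrational roots of x² + px + q = 0 with p, q ∈ ℤ. Then the minimal periods of the continued fraction expansions of x₁ and x₂ are equal as cyclic sequences. -/

import Mathlib

/-- The sequence of complete quotients of the continued fraction algorithm. -/
noncomputable def cq (x : ℝ) : ℕ → ℝ
  | 0 => x
  | n + 1 => (Int.fract (cq x n))⁻¹

/-- The `n`-th digit of the continued fraction expansion of `x`. -/
noncomputable def cfDigit (x : ℝ) (n : ℕ) : ℤ := ⌊cq x n⌋

/-- `b` is a period of the (eventually periodic) continued fraction of `x`. -/
def IsCFPeriod (x : ℝ) (b : List ℤ) : Prop :=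
  b ≠ [] ∧ ∃ N : ℕ, ∀ i : ℕ, cfDigit x (N + i) = b.getD (i % b.length) 0

/-- `b` is a minimal period of the continued fraction of `x`. -/
def IsMinCFPeriod (x : ℝ) (b : List ℤ) : Prop :=
  IsCFPeriod x b ∧ ∀ c : List ℤ, IsCFPeriod x c → b.length ≤ c.length

lemma cq_succ (x : ℝ) (n : ℕ) : cq x (n + 1) = (Int.fract (cq x n))⁻¹ := rfl

lemma irrational_fract {x : ℝ} (h : Irrational x) : Irrational (Int.fract x) := by
  have := h.sub_intCast ⌊x⌋
  rwa [Int.self_sub_floor] at this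

lemma cq_congr {x y : ℝ} {m n : ℕ} (h : cq x m = cq y n) (i : ℕ) :
    cq x (m + i) = cq y (n + i) := by
  induction i with
  | zero => exact h
  | succ i ih =>
      show cq x ((m + i) + 1) = cq y ((n + i) + 1)
      rw [cq_succ, cq_succ, ih]

/-- If `1 ≤ t < 2` then `fract t = t - 1`. -/
lemma fract_of_one_le_lt_two {t : ℝ} (h1 : 1 ≤ t) (h2 : t < 2) :
    Int.fract t = t - 1 := by
  have : ⌊t⌋ = 1 := Int.floor_eq_iff.mpr ⟨by exact_mod_cast h1, by norm_num [h2]⟩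
  rw [Int.fract, this]; norm_num

/-- The continued fraction tails of `-x` and `x` eventually coincide. -/
lemma neg_tail {x : ℝ} (h : Irrational x) :
    ∃ m n : ℕ, 0 < m ∧ cq (-x) m = cq x n := by
  set f := Int.fract x with hf
  have hfr : Irrational f := irrational_fract h
  have hf0 : 0 < f := lt_of_le_of_ne (Int.fract_nonneg x) (Ne.symm hfr.ne_zero)
  have hf1 : f < 1 := Int.fract_lt_one x
  have hf1' : (0:ℝ) < 1 - f := by linarith
  have hneg : Int.fract (-x) = 1 - f := Int.fract_neg hfr.ne_zero
  have c1 : cq (-x) 1 = (1 - f)⁻¹ := by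
    rw [cq_succ]; show (Int.fract (-x))⁻¹ = _; rw [hneg]
  have cx1 : cq x 1 = f⁻¹ := rfl
  have hhalf : f ≠ 1 / 2 := by
    intro hh
    rw [hh] at hfr
    exact Rat.not_irrational (1 / 2) (by rwa [show ((1 / 2 : ℚ) : ℝ) = 1 / 2 by norm_num])
  rcases lt_or_gt_of_ne hhalf with hlt | hgt
  · -- f < 1/2 : tail of -x from 3 equals tail of x from 2
    refine ⟨3, 2, by norm_num, ?_⟩
    have h1 : (1:ℝ) ≤ (1 - f)⁻¹ := by
      rw [le_inv_comm₀ one_pos hf1']; linarith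
    have h2 : (1 - f)⁻¹ < 2 := by
      rw [inv_lt_iff_one_lt_mul₀ hf1']; linarith
    have c2 : cq (-x) 2 = f⁻¹ - 1 := by
      rw [cq_succ, c1, fract_of_one_le_lt_two h1 h2]
      field_simp
      rw [sub_sub_cancel, div_self hf0.ne']
    have c3 : cq (-x) 3 = cq x 2 := by
      rw [cq_succ, c2, cq_succ, cx1]
      congr 1
      simp
    exact c3
  · -- f > 1/2 : tail of x from 3 equals tail of -x from 2
    refine ⟨2, 3, by norm_num, ?_⟩
    have h1 : (1:ℝ) ≤ f⁻¹ := by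
      rw [le_inv_comm₀ one_pos hf0]; linarith
    have h2 : f⁻¹ < 2 := by
      rw [inv_lt_iff_one_lt_mul₀ hf0]; linarith
    have cx2 : cq x 2 = (1 - f)⁻¹ - 1 := by
      rw [cq_succ, cx1, fract_of_one_le_lt_two h1 h2]
      rw [show f⁻¹ - 1 = (1 - f) / f by field_simp]
      rw [show ((1 - f) / f)⁻¹ = f / (1 - f) by rw [inv_div]]
      field_simp
      ring
    have cx3 : cq x 3 = cq (-x) 2 := by
      rw [cq_succ, cx2, cq_succ, c1]
      congr 1
      simp
    exact cx3.symm

/-- The other root of the monic quadratic has eventually the same digits as `x`. -/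
lemma conj_digit_tail {x y : ℝ} (p : ℤ) (hx : Irrational x) (hy : y = -x - p) :
    ∃ m n : ℕ, ∀ i : ℕ, cfDigit y (m + i) = cfDigit x (n + i) := by
  obtain ⟨m, n, hm, hmn⟩ := neg_tail hx
  have h1 : cq y 1 = cq (-x) 1 := by
    rw [cq_succ, cq_succ]
    congr 1
    show Int.fract (cq y 0) = Int.fract (cq (-x) 0)
    show Int.fract y = Int.fract (-x)
    rw [hy, sub_eq_add_neg, ← Int.cast_neg, Int.fract_add_intCast]
  have h2 : cq y m = cq (-x) m := by
    obtain ⟨m', rfl⟩ : ∃ m', m = 1 + m' := ⟨m - 1, by omega⟩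
    exact cq_congr h1 m'
  have h3 : cq y m = cq x n := h2.trans hmn
  exact ⟨m, n, fun i => congrArg Int.floor (cq_congr h3 i)⟩

/-- A period transfers along eventually-equal digit sequences, up to rotation. -/
lemma period_transfer {x y : ℝ} {m n : ℕ}
    (h : ∀ i : ℕ, cfDigit y (m + i) = cfDigit x (n + i))
    {b : List ℤ} (hb : IsCFPeriod x b) :
    IsCFPeriod y (b.rotate (n % b.length)) := by
  obtain ⟨hne, N, hN⟩ := hb
  have hl : 0 < b.length := List.length_pos_iff.mpr hne
  refine ⟨by simp [List.rotate_eq_nil_iff, hne], m + N, fun i => ?_⟩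
  have e1 : cfDigit y (m + N + i) = cfDigit x (n + (N + i)) := by
    rw [add_assoc]; exact h (N + i)
  have e2 : cfDigit x (n + (N + i)) = b.getD ((n + i) % b.length) 0 := by
    rw [show n + (N + i) = N + (n + i) by ring, hN (n + i)]
  rw [e1, e2]
  have hlen : (b.rotate (n % b.length)).length = b.length := List.length_rotate b _
  have hi : i % (b.rotate (n % b.length)).length < (b.rotate (n % b.length)).length := by
    rw [hlen]; exact Nat.mod_lt _ hl
  rw [List.getD_eq_getElem _ _ hi]
  rw [List.getElem_rotate]
  rw [List.getD_eq_getElem _ _ (by exact Nat.mod_lt _ hl)]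
  congr 1
  rw [hlen]
  rw [← Nat.add_mod, Nat.add_comm i n]

/-- Two equal-length periods of the same continued fraction are rotations. -/
lemma periods_rotate {x : ℝ} {b c : List ℤ} (hb : IsCFPeriod x b) (hc : IsCFPeriod x c)
    (hlen : b.length = c.length) : ∃ k : ℕ, b = c.rotate k := by
  obtain ⟨hbne, N₁, h₁⟩ := hb
  obtain ⟨hcne, N₂, h₂⟩ := hc
  have hl : 0 < b.length := List.length_pos_iff.mpr hbne
  set M := N₁ + b.length * (N₂ + 1) with hM
  have hMN : N₂ ≤ M := by
    have : N₂ + 1 ≤ b.length * (N₂ + 1) := Nat.le_mul_of_pos_left _ hl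
    omega
  have h₁' : ∀ i : ℕ, cfDigit x (M + i) = b.getD (i % b.length) 0 := by
    intro i
    have := h₁ (b.length * (N₂ + 1) + i)
    rw [show N₁ + (b.length * (N₂ + 1) + i) = M + i by omega] at this
    rw [this, Nat.mul_add_mod]
  refine ⟨(M - N₂) % c.length, ?_⟩
  apply List.ext_getElem (by rw [List.length_rotate, hlen])
  intro i hi₁ hi₂
  have hig : b[i] = b.getD (i % b.length) 0 := by
    rw [Nat.mod_eq_of_lt hi₁, List.getD_eq_getElem _ _ hi₁]
  rw [hig, ← h₁' i]
  have : M + i = N₂ + ((M - N₂) + i) := by omega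
  rw [this, h₂ ((M - N₂) + i)]
  rw [List.getElem_rotate]
  have hcl : 0 < c.length := hlen ▸ hl
  rw [List.getD_eq_getElem _ _ (Nat.mod_lt _ hcl)]
  congr 1
  rw [Nat.add_mod_mod, Nat.add_comm]

/-- Arnold: the two real irrational roots of a monic integer quadratic
`x² + px + q = 0` have equal minimal periods as cyclic sequences. -/
theorem roots_same_period
    (p q : ℤ) (x₁ x₂ : ℝ) (h1 : Irrational x₁) (h2 : Irrational x₂) (hne : x₁ ≠ x₂)
    (hroot1 : x₁ ^ 2 + (p : ℝ) * x₁ + (q : ℝ) = 0)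
    (hroot2 : x₂ ^ 2 + (p : ℝ) * x₂ + (q : ℝ) = 0)
    (b₁ b₂ : List ℤ) (hb₁ : IsMinCFPeriod x₁ b₁) (hb₂ : IsMinCFPeriod x₂ b₂) :
    ∃ k : ℕ, b₁ = b₂.rotate k := by
  have hsum : x₁ + x₂ + (p : ℝ) = 0 := by
    have hfac : (x₁ - x₂) * (x₁ + x₂ + (p : ℝ)) = 0 := by
      linear_combination hroot1 - hroot2
    rcases mul_eq_zero.mp hfac with h | h
    · exact absurd (sub_eq_zero.mp h) hne
    · exact h
  have hx₂ : x₂ = -x₁ - p := by linarith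
  have hx₁ : x₁ = -x₂ - p := by linarith
  -- transfer the period of x₁ to x₂ and vice versa
  obtain ⟨m, n, htail⟩ := conj_digit_tail p h1 hx₂
  obtain ⟨m', n', htail'⟩ := conj_digit_tail p h2 hx₁
  have hP2 : IsCFPeriod x₂ (b₁.rotate (n % b₁.length)) := period_transfer htail hb₁.1
  have hP1 : IsCFPeriod x₁ (b₂.rotate (n' % b₂.length)) := period_transfer htail' hb₂.1
  -- lengths are equal by minimality
  have hlen12 : b₂.length ≤ b₁.length := by
    have := hb₂.2 _ hP2
    rwa [List.length_rotate] at this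
  have hlen21 : b₁.length ≤ b₂.length := by
    have := hb₁.2 _ hP1
    rwa [List.length_rotate] at this
  have hlen : b₁.length = (b₂.rotate (n' % b₂.length)).length := by
    rw [List.length_rotate]; omega
  obtain ⟨k, hk⟩ := periods_rotate hb₁.1 hP1 hlen
  exact ⟨n' % b₂.length + k, by rw [hk, List.rotate_rotate]⟩
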